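/- Let $(x_n)_{n=0}^N$ be a real-valued martingale with respect to a filtration $(\mathcal F_n)_{n=0}^N$ on a probability space, with square function $S_n(x) = (\sum_{k=0}^n dx_k^2)^{1/2}$ where $dx_0 = x_0$, $dx_k = x_k - x_{k-1}$. Let $\mu = \inf\{n : S_n(x) \ge 1\}$ (with $\inf\emptyset = \infty$). Then $\mathbb E\big[(S_N^2(x) - 1)\,\mathbf 1_{\{\mu \le N\}}\big] \le \mathbb E\big[(x_N^2 + (dx_N^*)^2)\,\mathbf 1_{\{\mu \le N\}}\big]$, where $dx_N^* = \max_{0\le n\le N}|dx_n|$. -/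

import Mathlib

open MeasureTheory Finset

lemma mart_step {Ω : Type*} [m0 : MeasurableSpace Ω] {μ : Measure Ω} [IsProbabilityMeasure μ]
    (ℱ : Filtration ℕ m0) (x : ℕ → Ω → ℝ) (hx : Martingale x ℱ μ) (j : ℕ)
    (hj : Integrable (fun ω => x j ω ^ 2) μ)
    (hj1 : Integrable (fun ω => x (j + 1) ω ^ 2) μ)
    (B : Set Ω) (hB : MeasurableSet[ℱ j] B) :
    ∫ ω in B, (x (j + 1) ω - x j ω) ^ 2 ∂μ
      = ∫ ω in B, x (j + 1) ω ^ 2 ∂μ - ∫ ω in B, x j ω ^ 2 ∂μ := by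
  set f : Ω → ℝ := fun ω => x (j + 1) ω - x j ω with hf_def
  have sm_x : ∀ k, StronglyMeasurable (x k) := fun k => (hx.stronglyAdapted k).mono (ℱ.le k)
  have hf_meas : StronglyMeasurable f := (sm_x (j + 1)).sub (sm_x j)
  have hf_int : Integrable f μ := (hx.integrable (j + 1)).sub (hx.integrable j)
  have hf2_int : Integrable (fun ω => f ω ^ 2) μ := by
    refine Integrable.mono' ((hj1.add hj).const_mul 2) ?_ ?_
    · exact (hf_meas.measurable.pow_const 2).aestronglyMeasurable
    · filter_upwards with ω
      simp only [Real.norm_eq_abs, Pi.add_apply]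
      rw [abs_of_nonneg (sq_nonneg _)]
      simp only [hf_def]
      nlinarith [sq_nonneg (x (j+1) ω + x j ω)]
  have hprod_int : Integrable (fun ω => x j ω * f ω) μ := by
    refine Integrable.mono' (hj.add hf2_int) ?_ ?_
    · exact ((sm_x j).measurable.mul hf_meas.measurable).aestronglyMeasurable
    · filter_upwards with ω
      simp only [Real.norm_eq_abs, Pi.add_apply]
      rw [abs_mul]
      nlinarith [sq_abs (x j ω), sq_abs (f ω), sq_nonneg (|x j ω| - |f ω|),
        abs_nonneg (x j ω), abs_nonneg (f ω)]
  -- the indicator function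
  set g : Ω → ℝ := B.indicator (x j) with hg_def
  have hg_meas : StronglyMeasurable[ℱ j] g := (hx.stronglyAdapted j).indicator hB
  have hB0 : MeasurableSet B := ℱ.le j _ hB
  have hgf_eq : ∀ ω, g ω * f ω = B.indicator (fun ω => x j ω * f ω) ω := by
    intro ω
    by_cases hω : ω ∈ B <;> simp [hg_def, Set.indicator_of_mem, Set.indicator_of_notMem, hω]
  have hgf_int : Integrable (g * f) μ := by
    refine Integrable.mono' hprod_int.abs ?_ ?_
    · exact ((hg_meas.mono (ℱ.le j)).mul hf_meas).aestronglyMeasurable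
    · filter_upwards with ω
      simp only [Real.norm_eq_abs, Pi.mul_apply]
      rw [hgf_eq ω]
      by_cases hω : ω ∈ B <;>
        simp [Set.indicator_of_mem, Set.indicator_of_notMem, hω, abs_nonneg, mul_nonneg]
  -- conditional expectation of f is 0
  have hcond_f : μ[f | ℱ j] =ᵐ[μ] 0 := by
    have h1 : μ[f | ℱ j] =ᵐ[μ] μ[x (j+1) | ℱ j] - μ[x j | ℱ j] :=
      condExp_sub (hx.integrable (j+1)) (hx.integrable j) _
    have h2 : μ[x (j+1) | ℱ j] =ᵐ[μ] x j := hx.condExp_ae_eq (Nat.le_succ j)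
    have h3 : μ[x j | ℱ j] = x j :=
      condExp_of_stronglyMeasurable (ℱ.le j) (hx.stronglyAdapted j) (hx.integrable j)
    filter_upwards [h1, h2] with ω h1 h2
    simp [h1, h2, h3]
  -- pull-out
  have hpull : μ[g * f | ℱ j] =ᵐ[μ] g * μ[f | ℱ j] :=
    condExp_mul_of_stronglyMeasurable_left hg_meas hgf_int hf_int
  have hcross : ∫ ω in B, x j ω * f ω ∂μ = 0 := by
    have h1 : ∫ ω, g ω * f ω ∂μ = ∫ ω in B, x j ω * f ω ∂μ := by
      simp_rw [hgf_eq]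
      exact integral_indicator hB0
    have h2 : ∫ ω, g ω * f ω ∂μ = 0 := by
      have h0 : ∫ ω, (μ[g * f | ℱ j]) ω ∂μ = ∫ ω, (g * f) ω ∂μ :=
        integral_condExp (ℱ.le j)
      have hz : μ[g * f | ℱ j] =ᵐ[μ] 0 := by
        filter_upwards [hpull, hcond_f] with ω h h'
        simp only [Pi.mul_apply] at h ⊢
        rw [h, h', Pi.zero_apply, mul_zero]
      have : ∫ ω, (g * f) ω ∂μ = 0 := by
        rw [← h0, integral_congr_ae hz]; simp
      simpa using this
    rw [← h1, h2]
  have hring : ∀ ω, (x (j+1) ω - x j ω) ^ 2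
      = x (j+1) ω ^ 2 - 2 * (x j ω * f ω) - x j ω ^ 2 := by
    intro ω; simp only [hf_def]; ring
  calc ∫ ω in B, (x (j + 1) ω - x j ω) ^ 2 ∂μ
      = ∫ ω in B, (x (j+1) ω ^ 2 - 2 * (x j ω * f ω) - x j ω ^ 2) ∂μ := by
        exact integral_congr_ae (ae_of_all _ fun ω => hring ω)
    _ = ∫ ω in B, x (j+1) ω ^ 2 ∂μ - 2 * ∫ ω in B, x j ω * f ω ∂μ
          - ∫ ω in B, x j ω ^ 2 ∂μ := by
        have i2 : Integrable (fun ω => 2 * (x j ω * f ω)) (μ.restrict B) :=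
          hprod_int.integrableOn.const_mul 2
        have i1 : Integrable (fun ω => x (j+1) ω ^ 2 - 2 * (x j ω * f ω)) (μ.restrict B) := by
          exact hj1.integrableOn.sub i2
        have e1 : ∫ ω in B, (x (j+1) ω ^ 2 - 2 * (x j ω * f ω) - x j ω ^ 2) ∂μ
            = ∫ ω in B, (x (j+1) ω ^ 2 - 2 * (x j ω * f ω)) ∂μ - ∫ ω in B, x j ω ^ 2 ∂μ :=
          integral_sub i1 hj.integrableOn
        have e2 : ∫ ω in B, (x (j+1) ω ^ 2 - 2 * (x j ω * f ω)) ∂μ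
            = ∫ ω in B, x (j+1) ω ^ 2 ∂μ - ∫ ω in B, 2 * (x j ω * f ω) ∂μ :=
          integral_sub hj1.integrableOn i2
        rw [e1, e2, integral_const_mul]
    _ = ∫ ω in B, x (j+1) ω ^ 2 ∂μ - ∫ ω in B, x j ω ^ 2 ∂μ := by
        rw [hcross]; ring

/-- Auxiliary good-λ bound for the square function of a discrete real martingale:
`E[(S_N² - 1) 1_{μ ≤ N}] ≤ E[(x_N² + (dx_N^*)²) 1_{μ ≤ N}]`, where
`{μ ≤ N} = {∃ n ≤ N, S_n ≥ 1}`. -/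
theorem square_function_auxiliary_bound
    {Ω : Type*} [m0 : MeasurableSpace Ω] {μ : Measure Ω} [IsProbabilityMeasure μ]
    (ℱ : Filtration ℕ m0) (x : ℕ → Ω → ℝ) (hx : Martingale x ℱ μ) (N : ℕ)
    (dx : ℕ → Ω → ℝ) (hdx0 : dx 0 = x 0)
    (hdx : ∀ k : ℕ, dx (k + 1) = x (k + 1) - x k)
    (S : ℕ → Ω → ℝ)
    (hS : ∀ n ω, S n ω = Real.sqrt (∑ k ∈ Finset.range (n + 1), dx k ω ^ 2))
    (hint : ∀ k, Integrable (fun ω => dx k ω ^ 2) μ)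
    (hxint : Integrable (fun ω => x N ω ^ 2) μ) :
    ∫ ω in {ω | ∃ n ≤ N, 1 ≤ S n ω}, (S N ω ^ 2 - 1) ∂μ
      ≤ ∫ ω in {ω | ∃ n ≤ N, 1 ≤ S n ω},
          (x N ω ^ 2
            + ((Finset.range (N + 1)).sup' (Finset.nonempty_range_add_one)
                (fun n => |dx n ω|)) ^ 2) ∂μ := by
  classical
  set T : ℕ → Ω → ℝ := fun n ω => ∑ k ∈ Finset.range (n + 1), dx k ω ^ 2 with hT_def
  have hT_nonneg : ∀ n ω, 0 ≤ T n ω := fun n ω => Finset.sum_nonneg fun k _ => sq_nonneg _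
  have hSsq : ∀ ω, S N ω ^ 2 = T N ω := fun ω => by
    rw [hS]; exact Real.sq_sqrt (hT_nonneg N ω)
  have hSiff : ∀ n ω, (1 ≤ S n ω) ↔ 1 ≤ T n ω := fun n ω => by
    rw [hS, Real.le_sqrt' one_pos, one_pow]
  have sm_x : ∀ k, StronglyMeasurable (x k) := fun k => (hx.stronglyAdapted k).mono (ℱ.le k)
  have sm_dx : ∀ k, StronglyMeasurable[ℱ k] (dx k) := by
    intro k
    cases k with
    | zero => rw [hdx0]; exact hx.stronglyAdapted 0
    | succ k =>
      rw [hdx]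
      exact (hx.stronglyAdapted (k + 1)).sub ((hx.stronglyAdapted k).mono (ℱ.mono (Nat.le_succ k)))
  have sm_T : ∀ n, StronglyMeasurable[ℱ n] (T n) := by
    intro n
    have hTn : T n = ∑ k ∈ Finset.range (n + 1), fun ω => dx k ω ^ 2 := by
      funext ω; simp [hT_def, Finset.sum_apply]
    rw [hTn]
    refine Finset.stronglyMeasurable_sum _ fun k hk => ?_
    exact ((sm_dx k).mono (ℱ.mono (Nat.lt_succ_iff.mp (Finset.mem_range.mp hk)))).pow 2
  set D : Ω → ℝ := fun ω =>
    (Finset.range (N + 1)).sup' Finset.nonempty_range_add_one fun n => |dx n ω| with hD_def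
  have hD_meas : Measurable D := by
    have : D = (Finset.range (N + 1)).sup' Finset.nonempty_range_add_one
        (fun k => fun ω => |dx k ω|) := funext fun ω => by
      rw [Finset.sup'_apply]
    rw [this]
    exact Finset.measurable_sup' _ fun k _ => ((sm_dx k).mono (ℱ.le k)).measurable.abs
  have hD2_le : ∀ ω, D ω ^ 2 ≤ T N ω := by
    intro ω
    obtain ⟨i, hi, heq⟩ :=
      Finset.exists_mem_eq_sup' Finset.nonempty_range_add_one fun n => |dx n ω|
    rw [hD_def]
    simp only
    rw [heq, sq_abs]
    exact Finset.single_le_sum (fun k _ => sq_nonneg (dx k ω)) hi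
  have hdx_le_D : ∀ ω, ∀ k ∈ Finset.range (N + 1), dx k ω ^ 2 ≤ D ω ^ 2 := by
    intro ω k hk
    have h1 : |dx k ω| ≤ D ω := Finset.le_sup' (fun n => |dx n ω|) hk
    calc dx k ω ^ 2 = |dx k ω| ^ 2 := (sq_abs _).symm
      _ ≤ D ω ^ 2 := pow_le_pow_left₀ (abs_nonneg _) h1 2
  have hTint : ∀ n, Integrable (T n) μ := fun n =>
    integrable_finset_sum _ fun k _ => hint k
  have hD2_int : Integrable (fun ω => D ω ^ 2) μ := by
    refine Integrable.mono' (hTint N) ((hD_meas.pow_const 2).aestronglyMeasurable) ?_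
    filter_upwards with ω
    rw [Real.norm_eq_abs, abs_of_nonneg (sq_nonneg _)]
    exact hD2_le ω
  have hx2int : ∀ m, Integrable (fun ω => x m ω ^ 2) μ := by
    intro m
    induction m with
    | zero => exact (hint 0).congr (ae_of_all _ fun ω => by rw [hdx0])
    | succ m ih =>
      refine Integrable.mono' ((ih.add (hint (m + 1))).const_mul 2)
        ((sm_x (m + 1)).measurable.pow_const 2).aestronglyMeasurable ?_
      filter_upwards with ω
      simp only [Real.norm_eq_abs, Pi.add_apply]
      rw [abs_of_nonneg (sq_nonneg _)]
      have hxe : dx (m + 1) ω = x (m + 1) ω - x m ω := congrFun (hdx m) ω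
      rw [show x (m + 1) ω = x m ω + dx (m + 1) ω from by rw [hxe]; ring]
      nlinarith [sq_nonneg (x m ω - dx (m + 1) ω)]
  set Bset : ℕ → Set Ω := fun m => {ω | (∀ j < m, T j ω < 1) ∧ 1 ≤ T m ω} with hB_def
  have hB_measF : ∀ m, MeasurableSet[ℱ m] (Bset m) := by
    intro m
    have h1 : MeasurableSet[ℱ m] {ω | 1 ≤ T m ω} :=
      measurableSet_le measurable_const (sm_T m).measurable
    have h2 : ∀ j, j < m → MeasurableSet[ℱ m] {ω | T j ω < 1} := fun j hj =>
      measurableSet_lt ((sm_T j).mono (ℱ.mono hj.le)).measurable measurable_const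
    have hBe : Bset m = (⋂ j ∈ Set.Iio m, {ω | T j ω < 1}) ∩ {ω | 1 ≤ T m ω} := by
      ext ω
      simp only [hB_def, Set.mem_setOf_eq, Set.mem_inter_iff, Set.mem_iInter, Set.mem_Iio]
    rw [hBe]
    exact (MeasurableSet.biInter (Set.to_countable _) fun j hj => h2 j hj).inter h1
  have hB_meas : ∀ m, MeasurableSet (Bset m) := fun m => ℱ.le m _ (hB_measF m)
  have A_eq : {ω | ∃ n ≤ N, 1 ≤ S n ω} = ⋃ m ∈ Finset.range (N + 1), Bset m := by
    ext ω
    simp only [Set.mem_setOf_eq, Set.mem_iUnion, Finset.mem_range, exists_prop]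
    constructor
    · rintro ⟨n, hn, hSn⟩
      have hTn : 1 ≤ T n ω := (hSiff n ω).mp hSn
      have hex : ∃ n, 1 ≤ T n ω := ⟨n, hTn⟩
      refine ⟨Nat.find hex, ?_, ?_, Nat.find_spec hex⟩
      · exact lt_of_le_of_lt (Nat.find_min' hex hTn) (Nat.lt_succ_of_le hn)
      · intro j hj
        exact lt_of_not_ge (Nat.find_min hex hj)
    · rintro ⟨m, hm, _, hTm⟩
      exact ⟨m, Nat.lt_succ_iff.mp hm, (hSiff m ω).mpr hTm⟩
  have hdisj : Set.Pairwise ↑(Finset.range (N + 1)) (Function.onFun Disjoint Bset) := by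
    have key : ∀ a b : ℕ, a < b → Disjoint (Bset a) (Bset b) := by
      intro a b h
      rw [Set.disjoint_left]
      intro ω ha hb
      exact absurd ha.2 (not_le.mpr (hb.1 a h))
    intro a _ b _ hab
    rcases hab.lt_or_gt with h | h
    · exact key a b h
    · exact (key b a h).symm
  -- telescoping
  have htel : ∀ m n : ℕ, m ≤ n →
      ∫ ω in Bset m, (∑ k ∈ Finset.Ico (m + 1) (n + 1), dx k ω ^ 2) ∂μ
        = ∫ ω in Bset m, x n ω ^ 2 ∂μ - ∫ ω in Bset m, x m ω ^ 2 ∂μ := by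
    intro m n hn
    induction n, hn using Nat.le_induction with
    | base => simp
    | succ n hn ih =>
      have i1 : Integrable (fun ω => ∑ k ∈ Finset.Ico (m + 1) (n + 1), dx k ω ^ 2)
          (μ.restrict (Bset m)) :=
        (integrable_finset_sum _ fun k _ => hint k).integrableOn
      have e : ∫ ω in Bset m, (∑ k ∈ Finset.Ico (m + 1) (n + 2), dx k ω ^ 2) ∂μ
          = ∫ ω in Bset m, (∑ k ∈ Finset.Ico (m + 1) (n + 1), dx k ω ^ 2) ∂μ
            + ∫ ω in Bset m, dx (n + 1) ω ^ 2 ∂μ := by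
        have hsum : ∀ ω, ∑ k ∈ Finset.Ico (m + 1) (n + 2), dx k ω ^ 2
            = (∑ k ∈ Finset.Ico (m + 1) (n + 1), dx k ω ^ 2) + dx (n + 1) ω ^ 2 :=
          fun ω => Finset.sum_Ico_succ_top (Nat.succ_le_succ hn) _
        rw [integral_congr_ae (ae_of_all _ hsum)]
        exact integral_add i1 (hint (n + 1)).integrableOn
      have hstep : ∫ ω in Bset m, dx (n + 1) ω ^ 2 ∂μ
          = ∫ ω in Bset m, x (n + 1) ω ^ 2 ∂μ - ∫ ω in Bset m, x n ω ^ 2 ∂μ := by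
        have hms := mart_step ℱ x hx n (hx2int n) (hx2int (n + 1)) (Bset m)
          ((ℱ.mono hn) _ (hB_measF m))
        rw [← hms]
        exact integral_congr_ae (ae_of_all _ fun ω => by
          show dx (n + 1) ω ^ 2 = (x (n + 1) ω - x n ω) ^ 2
          rw [hdx]; rfl)
      rw [e, ih, hstep]
      ring
  -- key estimate on each piece
  have hkey : ∀ m ∈ Finset.range (N + 1),
      ∫ ω in Bset m, (T N ω - 1) ∂μ ≤ ∫ ω in Bset m, (x N ω ^ 2 + D ω ^ 2) ∂μ := by
    intro m hm
    have hmN : m ≤ N := Nat.lt_succ_iff.mp (Finset.mem_range.mp hm)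
    have hsplit : ∀ ω, T N ω - 1
        = (T m ω - 1) + ∑ k ∈ Finset.Ico (m + 1) (N + 1), dx k ω ^ 2 := by
      intro ω
      have hTe : T N ω = T m ω + ∑ k ∈ Finset.Ico (m + 1) (N + 1), dx k ω ^ 2 := by
        simp only [hT_def, Finset.range_eq_Ico]
        rw [Finset.sum_Ico_consecutive _ (Nat.zero_le (m + 1)) (Nat.succ_le_succ hmN)]
      linarith
    have iT : Integrable (fun ω => T m ω - 1) (μ.restrict (Bset m)) :=
      ((hTint m).sub (integrable_const 1)).integrableOn
    have iS : Integrable (fun ω => ∑ k ∈ Finset.Ico (m + 1) (N + 1), dx k ω ^ 2)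
        (μ.restrict (Bset m)) :=
      (integrable_finset_sum _ fun k _ => hint k).integrableOn
    calc ∫ ω in Bset m, (T N ω - 1) ∂μ
        = ∫ ω in Bset m, (T m ω - 1) ∂μ
          + ∫ ω in Bset m, (∑ k ∈ Finset.Ico (m + 1) (N + 1), dx k ω ^ 2) ∂μ := by
          rw [integral_congr_ae (ae_of_all _ hsplit)]
          exact integral_add iT iS
      _ ≤ ∫ ω in Bset m, D ω ^ 2 ∂μ + ∫ ω in Bset m, x N ω ^ 2 ∂μ := by
          refine add_le_add ?_ ?_
          · refine setIntegral_mono_on iT hD2_int.integrableOn (hB_meas m) ?_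
            intro ω hω
            have hωB : (∀ j < m, T j ω < 1) ∧ 1 ≤ T m ω := hω
            cases m with
            | zero =>
              have h0 : T 0 ω = dx 0 ω ^ 2 := by simp [hT_def]
              have := hdx_le_D ω 0 (Finset.mem_range.mpr (Nat.succ_pos N))
              rw [h0]
              linarith
            | succ j =>
              have hTj : T j ω < 1 := hωB.1 j (Nat.lt_succ_self j)
              have hTe : T (j + 1) ω = T j ω + dx (j + 1) ω ^ 2 := by
                simp [hT_def, Finset.sum_range_succ]
              have hle := hdx_le_D ω (j + 1) (Finset.mem_range.mpr (Nat.succ_lt_succ hmN))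
              rw [hTe]
              linarith
          · rw [htel m N hmN]
            have h0 : 0 ≤ ∫ ω in Bset m, x m ω ^ 2 ∂μ :=
              setIntegral_nonneg (hB_meas m) fun ω _ => sq_nonneg _
            linarith
      _ = ∫ ω in Bset m, (x N ω ^ 2 + D ω ^ 2) ∂μ := by
          rw [integral_add hxint.integrableOn hD2_int.integrableOn, add_comm]
  -- assemble
  rw [A_eq]
  have hL : ∫ ω in ⋃ m ∈ Finset.range (N + 1), Bset m, (S N ω ^ 2 - 1) ∂μ
      = ∑ m ∈ Finset.range (N + 1), ∫ ω in Bset m, (T N ω - 1) ∂μ := by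
    rw [integral_congr_ae (ae_of_all _ fun ω => by
        show S N ω ^ 2 - 1 = T N ω - 1
        rw [hSsq ω] :
      (fun ω => S N ω ^ 2 - 1) =ᵐ[μ.restrict (⋃ m ∈ Finset.range (N + 1), Bset m)]
        fun ω => T N ω - 1)]
    exact integral_biUnion_finset _ (fun i _ => hB_meas i) hdisj
      (fun i _ => ((hTint N).sub (integrable_const 1)).integrableOn)
  have hR : ∫ ω in ⋃ m ∈ Finset.range (N + 1), Bset m,
        (x N ω ^ 2 + D ω ^ 2) ∂μ
      = ∑ m ∈ Finset.range (N + 1), ∫ ω in Bset m, (x N ω ^ 2 + D ω ^ 2) ∂μ :=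
    integral_biUnion_finset _ (fun i _ => hB_meas i) hdisj
      (fun i _ => (hxint.add hD2_int).integrableOn)
  calc ∫ ω in ⋃ m ∈ Finset.range (N + 1), Bset m, (S N ω ^ 2 - 1) ∂μ
      = ∑ m ∈ Finset.range (N + 1), ∫ ω in Bset m, (T N ω - 1) ∂μ := hL
    _ ≤ ∑ m ∈ Finset.range (N + 1), ∫ ω in Bset m, (x N ω ^ 2 + D ω ^ 2) ∂μ :=
        Finset.sum_le_sum hkey
    _ = ∫ ω in ⋃ m ∈ Finset.range (N + 1), Bset m, (x N ω ^ 2 + D ω ^ 2) ∂μ := hR.symm
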